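/- Let A ⊆ GL(V) and B ⊆ GL(V') be images of a group Γ acting absolutely irreducibly on finite-dimensional spaces V, V' over a field of characteristic p, with dim V, dim V' > 2(p+1), and suppose the projective images of Γ on V and V' are disjoint (Γ surjects onto ℙG × ℙG'). If both A and B satisfy the spanning condition that their semisimple elements span ad(V) ⊗ k̄ and ad(V') ⊗ k̄ respectively, then the image of Γ on V ⊗ V' satisfies the analogous spanning condition: its semisimple elements span ad(V ⊗ V') ⊗ k̄. -/

import Mathlib

open TensorProduct

/-- `rTensor` as an algebra homomorphism on endomorphism algebras. -/
noncomputable def rTensorAlgHom' (k V V' : Type*) [Field k]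
    [AddCommGroup V] [Module k V] [AddCommGroup V'] [Module k V'] :
    Module.End k V →ₐ[k] Module.End k (V ⊗[k] V') :=
  AlgHom.ofLinearMap (LinearMap.rTensorHom V')
    (LinearMap.rTensor_id V' V)
    (fun x y => by
      show LinearMap.rTensor V' (x * y) = LinearMap.rTensor V' x * LinearMap.rTensor V' y
      rw [Module.End.mul_eq_comp, Module.End.mul_eq_comp, LinearMap.rTensor_comp])

/-- `lTensor` as an algebra homomorphism on endomorphism algebras. -/
noncomputable def lTensorAlgHom' (k V V' : Type*) [Field k]
    [AddCommGroup V] [Module k V] [AddCommGroup V'] [Module k V'] :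
    Module.End k V' →ₐ[k] Module.End k (V ⊗[k] V') :=
  AlgHom.ofLinearMap (LinearMap.lTensorHom V)
    (LinearMap.lTensor_id V V')
    (fun x y => by
      show LinearMap.lTensor V (x * y) = LinearMap.lTensor V x * LinearMap.lTensor V y
      rw [Module.End.mul_eq_comp, Module.End.mul_eq_comp, LinearMap.lTensor_comp])

open Polynomial in
/-- If `f` and `f'` are semisimple endomorphisms of finite-dimensional vector spaces over a
perfect field, then `TensorProduct.map f f'` is a semisimple endomorphism of `V ⊗ V'`. -/
lemma tensor_isSemisimple {k V V' : Type*} [Field k] [PerfectField k]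
    [AddCommGroup V] [Module k V] [FiniteDimensional k V]
    [AddCommGroup V'] [Module k V'] [FiniteDimensional k V']
    {f : Module.End k V} {f' : Module.End k V'}
    (hf : f.IsSemisimple) (hf' : f'.IsSemisimple) :
    Module.End.IsSemisimple (TensorProduct.map f f' : Module.End k (V ⊗[k] V')) := by
  have h1 : Module.End.IsSemisimple (LinearMap.rTensor V' f) := by
    refine Module.End.isSemisimple_of_squarefree_aeval_eq_zero hf.minpoly_squarefree ?_
    have : LinearMap.rTensor V' f = rTensorAlgHom' k V V' f := rfl
    rw [this, aeval_algHom_apply, minpoly.aeval, map_zero]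
  have h2 : Module.End.IsSemisimple (LinearMap.lTensor V f') := by
    refine Module.End.isSemisimple_of_squarefree_aeval_eq_zero hf'.minpoly_squarefree ?_
    have : LinearMap.lTensor V f' = lTensorAlgHom' k V V' f' := rfl
    rw [this, aeval_algHom_apply, minpoly.aeval, map_zero]
  have hcomm : Commute (LinearMap.rTensor V' f) (LinearMap.lTensor V f') := by
    show _ * _ = _ * _
    rw [Module.End.mul_eq_comp, Module.End.mul_eq_comp, LinearMap.rTensor_comp_lTensor,
      LinearMap.lTensor_comp_rTensor]
  have heq : TensorProduct.map f f' = LinearMap.rTensor V' f * LinearMap.lTensor V f' := by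
    rw [Module.End.mul_eq_comp, LinearMap.rTensor_comp_lTensor]
  rw [heq]
  exact Module.End.IsSemisimple.mul_of_commute hcomm h1 h2

/-- Let `V`, `V'` be absolutely irreducible representations of `Γ` over an (algebraically
closed) field of characteristic `p`, of dimensions `> 2(p+1)`, with disjoint projective
images.  If the semisimple elements of the images of `Γ` on `V` and `V'` span `ad(V)` and
`ad(V')` respectively, then the semisimple elements of the image of `Γ` on `V ⊗ V'` span
`ad(V ⊗ V')`. -/
theorem stmt_14
    {k Γ V V' : Type*} [Field k] [IsAlgClosed k] [Group Γ]
    {p : ℕ} [Fact p.Prime] [CharP k p]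
    [AddCommGroup V] [Module k V] [FiniteDimensional k V]
    [AddCommGroup V'] [Module k V'] [FiniteDimensional k V']
    (ρ : Representation k Γ V) (ρ' : Representation k Γ V')
    (hdimV : 2 * (p + 1) < Module.finrank k V)
    (hdimV' : 2 * (p + 1) < Module.finrank k V')
    (hirr : ∀ U : Submodule k V, (∀ g, ∀ v ∈ U, ρ g v ∈ U) → U = ⊥ ∨ U = ⊤)
    (hirr' : ∀ U : Submodule k V', (∀ g, ∀ v ∈ U, ρ' g v ∈ U) → U = ⊥ ∨ U = ⊤)
    (hdisj : ∀ g g' : Γ, ∃ γ : Γ, (∃ c : kˣ, ∀ v, ρ γ v = (c : k) • ρ g v) ∧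
      (∃ c' : kˣ, ∀ v, ρ' γ v = (c' : k) • ρ' g' v))
    (hspan : Submodule.span k
      {f : Module.End k V | (∃ g : Γ, ρ g = f) ∧ f.IsSemisimple} = ⊤)
    (hspan' : Submodule.span k
      {f : Module.End k V' | (∃ g : Γ, ρ' g = f) ∧ f.IsSemisimple} = ⊤) :
    Submodule.span k
      {f : Module.End k (V ⊗[k] V') |
        (∃ γ : Γ, (ρ.tprod ρ') γ = f) ∧ f.IsSemisimple} = ⊤ := by
  set S := {f : Module.End k V | (∃ g : Γ, ρ g = f) ∧ f.IsSemisimple} with hS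
  set S' := {f : Module.End k V' | (∃ g : Γ, ρ' g = f) ∧ f.IsSemisimple} with hS'
  set T := {f : Module.End k (V ⊗[k] V') |
    (∃ γ : Γ, (ρ.tprod ρ') γ = f) ∧ f.IsSemisimple} with hT
  -- Key: tensor products of semisimple elements of the images lie in the span of `T`.
  have key : ∀ f ∈ S, ∀ f' ∈ S', TensorProduct.map f f' ∈ Submodule.span k T := by
    rintro f ⟨⟨g, rfl⟩, hf⟩ f' ⟨⟨g', rfl⟩, hf'⟩
    obtain ⟨γ, ⟨c, hc⟩, ⟨c', hc'⟩⟩ := hdisj g g'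
    have hργ : ρ γ = (c : k) • ρ g := LinearMap.ext hc
    have hργ' : ρ' γ = (c' : k) • ρ' g' := LinearMap.ext hc'
    have hFeq : (ρ.tprod ρ') γ
        = ((c : k) * (c' : k)) • TensorProduct.map (ρ g) (ρ' g') := by
      rw [Representation.tprod_apply, hργ, hργ', TensorProduct.map_smul_left,
        TensorProduct.map_smul_right, smul_smul]
    have hss : Module.End.IsSemisimple ((ρ.tprod ρ') γ) := by
      rw [hFeq]
      exact Module.End.IsSemisimple_smul _ (tensor_isSemisimple hf hf')
    have hmem : (ρ.tprod ρ') γ ∈ T := ⟨⟨γ, rfl⟩, hss⟩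
    have hcc : ((c : k) * (c' : k)) ≠ 0 :=
      mul_ne_zero (Units.ne_zero c) (Units.ne_zero c')
    have heq2 : TensorProduct.map (ρ g) (ρ' g')
        = ((c : k) * (c' : k))⁻¹ • (ρ.tprod ρ') γ := by
      rw [hFeq, smul_smul, inv_mul_cancel₀ hcc, one_smul]
    rw [heq2]
    exact Submodule.smul_mem _ _ (Submodule.subset_span hmem)
  have h2 : ∀ (f : Module.End k V) (f' : Module.End k V'),
      TensorProduct.map f f' ∈ Submodule.span k T := by
    have hle : Submodule.map₂ (TensorProduct.mapBilinear (RingHom.id k) V V' V V') ⊤ ⊤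
        ≤ Submodule.span k T := by
      rw [← hspan, ← hspan', Submodule.map₂_span_span]
      refine Submodule.span_le.mpr ?_
      rintro x ⟨a, ha, b, hb, rfl⟩
      exact key a ha b hb
    intro f f'
    exact hle (Submodule.apply_mem_map₂ _ Submodule.mem_top Submodule.mem_top)
  rw [eq_top_iff]
  intro x _
  obtain ⟨y, rfl⟩ := (homTensorHomEquiv k V V' V V').surjective x
  induction y using TensorProduct.induction_on with
  | zero => simpa using Submodule.zero_mem _
  | tmul f f' =>
    rw [homTensorHomEquiv_apply, TensorProduct.homTensorHomMap_apply]
    exact h2 f f'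
  | add a b ha hb =>
    rw [map_add]
    exact Submodule.add_mem _ (ha Submodule.mem_top) (hb Submodule.mem_top)
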